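/- For every odd prime p, there exists γ ∈ F_{p^2} with γ^(p-1) = -1, and for any such γ the polynomial f(x) = x + γ·(x^p + x)^2 permutes F_{p^2}. -/

import Mathlib

/-- For odd `p` there exists `γ ∈ F_{p^2}` with `γ^(p-1) = -1`, and for any such `γ`
the polynomial `x + γ·(x^p + x)^2` permutes `F_{p^2}`. -/
theorem stmt_12 (p : ℕ) (hp : p.Prime) (hodd : Odd p)
    (F : Type*) [Field F] [Fintype F] (hq : Fintype.card F = p ^ 2) (hchar : CharP F p) :
    (∃ γ : F, γ ^ (p - 1) = -1) ∧
      ∀ γ : F, γ ^ (p - 1) = -1 →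
        Function.Bijective (fun x : F => x + γ * (x ^ p + x) ^ 2) := by
  haveI : Fact p.Prime := ⟨hp⟩
  classical
  obtain ⟨k, hk⟩ := hodd
  have hk1 : 1 ≤ k := by
    rcases Nat.eq_zero_or_pos k with h | h
    · exfalso; subst h; simp at hk; subst hk; exact hp.one_lt.ne rfl
    · exact h
  have hsq : p ^ 2 = 4 * k ^ 2 + 4 * k + 1 := by subst hk; ring
  constructor
  · -- existence
    obtain ⟨g, hg⟩ := IsCyclic.exists_generator (α := Fˣ)
    have hord : orderOf g = p ^ 2 - 1 := by
      rw [orderOf_eq_card_of_forall_mem_zpowers hg, Nat.card_eq_fintype_card,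
        Fintype.card_units, hq]
    refine ⟨((g : Fˣ) : F) ^ ((p + 1) / 2), ?_⟩
    have harith : (p + 1) / 2 * (p - 1) = (p ^ 2 - 1) / 2 := by
      have l1 : (p + 1) / 2 = k + 1 := by omega
      have l2 : p - 1 = 2 * k := by omega
      have l3 : (p ^ 2 - 1) / 2 = 2 * k ^ 2 + 2 * k := by omega
      rw [l1, l2, l3]; ring
    rw [← pow_mul, harith]
    set u : Fˣ := g ^ ((p ^ 2 - 1) / 2) with hu
    have htwo : 2 ∣ p ^ 2 - 1 := by omega
    have hu2 : u ^ 2 = 1 := by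
      rw [hu, ← pow_mul, Nat.div_mul_cancel htwo, ← hord, pow_orderOf_eq_one]
    have hune : u ≠ 1 := by
      intro h
      have hdvd := orderOf_dvd_of_pow_eq_one (n := (p ^ 2 - 1) / 2) (x := g) h
      rw [hord] at hdvd
      have hpos : 0 < (p ^ 2 - 1) / 2 := by omega
      have := Nat.le_of_dvd hpos hdvd
      omega
    have hu2c : (u : F) ^ 2 = 1 := by
      have := congrArg (Units.val) hu2
      push_cast at this
      exact this
    have hz : ((u : F) - 1) * ((u : F) + 1) = 0 := by linear_combination hu2c
    have hcast : (u : F) = ((g : Fˣ) : F) ^ ((p ^ 2 - 1) / 2) := by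
      rw [hu]; push_cast; ring
    rcases mul_eq_zero.mp hz with h | h
    · exact absurd (Units.ext (by rw [sub_eq_zero] at h; simpa using h)) hune
    · rw [← hcast]
      exact eq_neg_of_add_eq_zero_left h
  · intro γ hγ
    have hγp : γ ^ p = -γ := by
      have h1 : γ ^ p = γ ^ (p - 1) * γ := by
        rw [← pow_succ]; congr 1; omega
      rw [h1, hγ]; ring
    have key : ∀ x : F, (x + γ * (x ^ p + x) ^ 2) ^ p + (x + γ * (x ^ p + x) ^ 2)
        = x ^ p + x := by
      intro x
      have hx2 : (x ^ p) ^ p = x := by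
        have := FiniteField.pow_card x
        rw [hq] at this
        rw [← pow_mul, ← pow_two]; exact this
      have h1 : (x + γ * (x ^ p + x) ^ 2) ^ p
          = x ^ p + γ ^ p * ((x ^ p + x) ^ p) ^ 2 := by
        rw [add_pow_char, mul_pow, ← pow_right_comm]
      have h2 : (x ^ p + x) ^ p = x + x ^ p := by
        rw [add_pow_char, hx2]
      rw [h1, h2, hγp]; ring
    rw [← Finite.injective_iff_bijective]
    intro x y hxy
    simp only at hxy
    have hT : x ^ p + x = y ^ p + y := by
      have h := congrArg (fun z => z ^ p + z) hxy
      rw [key x, key y] at h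
      exact h
    have h2 : x + γ * (x ^ p + x) ^ 2 = y + γ * (x ^ p + x) ^ 2 := by
      rw [hxy, hT]
    exact add_right_cancel h2
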